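/- Let H ∈ Matrix n n ℂ, t ∈ ℝ, N ∈ ℕ, and let a : {−N,…,N} → ℂ be a family of coefficients. Let D be the (2N+1)×(2N+1) diagonal matrix with diagonal entries k for k ∈ {−N,…,N}, and let X := exp(−i·t·(H ⊗ D)) be the matrix exponential of the Kronecker product, regarded as a block matrix whose (k,l) block X^{(k,l)} ∈ Matrix n n ℂ has entries X^{(k,l)}_{i j} = X_{(i,k),(j,l)}. Then ∑_{k,l=−N}^{N} a_k · conj(a_l) · X^{(k,l)} = ∑_{m=−N}^{N} |a_m|² · exp(−i·t·m·H). -/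

import Mathlib

open Matrix NormedSpace
open scoped Kronecker

section
attribute [local instance] Matrix.linftyOpNormedRing Matrix.linftyOpNormedAlgebra

theorem pi_exp_apply_aux {ι : Type*} [Fintype ι] {n : ℕ} (v : ι → Matrix (Fin n) (Fin n) ℂ) (k : ι) :
    exp v k = exp (v k) := by
  letI : NormedAddCommGroup (Matrix (Fin n) (Fin n) ℂ) := Matrix.linftyOpNormedAddCommGroup
  letI : NormedSpace ℂ (Matrix (Fin n) (Fin n) ℂ) := Matrix.linftyOpNormedSpace
  haveI : CompleteSpace (Matrix (Fin n) (Fin n) ℂ) := FiniteDimensional.complete ℂ _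
  exact Pi.coe_exp v k

end

/-- LCU identity: for `X = exp(−i t (H ⊗ D))` with `D = diag(−N,…,N)`, one has
`∑_{k,l} a_k conj(a_l) X^{(k,l)} = ∑_m |a_m|² exp(−i t m H)`, where `X^{(k,l)}` is the
`(k,l)` block of `X`. Indices `k ∈ {−N,…,N}` are encoded as `k : Fin (2N+1)` with
integer value `(k : ℤ) − N`. -/
theorem stmt10 (n N : ℕ) (hn : 1 ≤ n)
    (H : Matrix (Fin n) (Fin n) ℂ) (t : ℝ)
    (a : Fin (2 * N + 1) → ℂ)
    (D : Matrix (Fin (2 * N + 1)) (Fin (2 * N + 1)) ℂ)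
    (hD : D = Matrix.diagonal fun k : Fin (2 * N + 1) => (((k : ℤ) - (N : ℤ) : ℤ) : ℂ))
    (X : Matrix (Fin n × Fin (2 * N + 1)) (Fin n × Fin (2 * N + 1)) ℂ)
    (hX : X = exp ((-(Complex.I * (t : ℂ))) • (H ⊗ₖ D))) :
    (∑ k : Fin (2 * N + 1), ∑ l : Fin (2 * N + 1),
        (a k * (starRingEnd ℂ) (a l)) • Matrix.of fun i j : Fin n => X (i, k) (j, l)) =
      ∑ m : Fin (2 * N + 1), ((‖a m‖ ^ 2 : ℝ) : ℂ) •
        exp ((-(Complex.I * (t : ℂ) * (((m : ℤ) - (N : ℤ) : ℤ) : ℂ))) • H) := by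
  have hkey : (-(Complex.I * (t : ℂ))) • (H ⊗ₖ D) =
      Matrix.blockDiagonal (fun k : Fin (2 * N + 1) =>
        (-(Complex.I * (t : ℂ) * (((k : ℤ) - (N : ℤ) : ℤ) : ℂ))) • H) := by
    subst hD
    ext ⟨i, k⟩ ⟨j, l⟩
    by_cases h : k = l
    · subst h
      simp [Matrix.kroneckerMap_apply, Matrix.blockDiagonal_apply, Matrix.diagonal_apply]
      ring
    · simp [Matrix.kroneckerMap_apply, Matrix.blockDiagonal_apply, Matrix.diagonal_apply, h]
  have hXb : X = Matrix.blockDiagonal (fun k : Fin (2 * N + 1) =>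
      exp ((-(Complex.I * (t : ℂ) * (((k : ℤ) - (N : ℤ) : ℤ) : ℂ))) • H)) := by
    rw [hX, hkey, Matrix.exp_blockDiagonal]
    congr 1
    funext k
    exact pi_exp_apply_aux _ k
  subst hXb
  refine Finset.sum_congr rfl (fun k _ => ?_)
  rw [Finset.sum_eq_single k]
  · congr 1
    · rw [Complex.mul_conj']
      norm_cast
    · ext i j
      simp [Matrix.blockDiagonal_apply]
  · intro l _ hl
    have : (Matrix.of fun i j : Fin n =>
        Matrix.blockDiagonal (fun k : Fin (2 * N + 1) =>
          exp ((-(Complex.I * (t : ℂ) * (((k : ℤ) - (N : ℤ) : ℤ) : ℂ))) • H)) (i, k) (j, l)) =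
        (0 : Matrix (Fin n) (Fin n) ℂ) := by
      ext i j
      simp [Matrix.blockDiagonal_apply, Ne.symm hl]
    rw [this, smul_zero]
  · intro h
    exact absurd (Finset.mem_univ k) h
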